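/- Let f : {0,1,...,m} → ℝ be a function with no local minimum, i.e., for all ζ with 1 ≤ ζ ≤ m-1, f(ζ) > min(f(ζ-1), f(ζ+1)). If f is nonnegative and for some ζ₀ ∈ {0,...,m} and ν ≥ 0 we have ∑_{ζ ≥ ζ₀} f(ζ) ≥ ν and ∑_{ζ ≤ ζ₀} f(ζ) ≥ ν, then f(ζ₀) ≥ ν/m. -/

import Mathlib

/-- No-local-minimum functions: if the tail sums on both sides of `ζ₀` are at least `ν`,
then `f ζ₀ ≥ ν / m`. -/
theorem no_local_min_isoperimetry (m : ℕ) (hm : 1 ≤ m) (f : ℕ → ℝ)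
    (hnonneg : ∀ ζ ≤ m, 0 ≤ f ζ)
    (hnlm : ∀ ζ, 1 ≤ ζ → ζ ≤ m - 1 → f ζ > min (f (ζ - 1)) (f (ζ + 1)))
    (ζ₀ : ℕ) (hζ₀ : ζ₀ ≤ m) (ν : ℝ) (hν : 0 ≤ ν)
    (hupper : ν ≤ ∑ ζ ∈ Finset.Icc ζ₀ m, f ζ)
    (hlower : ν ≤ ∑ ζ ∈ Finset.Icc 0 ζ₀, f ζ) :
    f ζ₀ ≥ ν / m := by
  have hm0 : (0:ℝ) < m := by positivity
  have hf0 : 0 ≤ f ζ₀ := hnonneg ζ₀ hζ₀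
  -- generic finisher: if ν ≤ c * f ζ₀ with (c:ℝ) ≤ m, done
  have finish : ∀ c : ℕ, (c:ℝ) ≤ m → ν ≤ (c:ℝ) * f ζ₀ → f ζ₀ ≥ ν / m := by
    intro c hc hν'
    rw [ge_iff_le, div_le_iff₀ hm0]
    calc ν ≤ (c:ℝ) * f ζ₀ := hν'
    _ ≤ (m:ℝ) * f ζ₀ := by nlinarith
    _ = f ζ₀ * m := by ring
  by_cases hmono : ∀ ζ < ζ₀, f ζ ≤ f (ζ + 1)
  · -- f nondecreasing on [0, ζ₀]
    have hle : ∀ ζ ≤ ζ₀, f ζ ≤ f ζ₀ := by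
      have key : ∀ ζ b, ζ ≤ b → b ≤ ζ₀ → f ζ ≤ f b := by
        intro ζ b hζb
        induction b, hζb using Nat.le_induction with
        | base => intro _; exact le_refl _
        | succ b hb ih =>
          intro h
          exact le_trans (ih (by omega)) (hmono b (by omega))
      intro ζ hζ; exact key ζ ζ₀ hζ le_rfl
    rcases Nat.lt_or_ge ζ₀ m with hlt | hge
    · apply finish (ζ₀ + 1) (by exact_mod_cast hlt) ?_
      calc ν ≤ ∑ ζ ∈ Finset.Icc 0 ζ₀, f ζ := hlower
      _ ≤ (Finset.Icc 0 ζ₀).card • f ζ₀ :=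
          Finset.sum_le_card_nsmul _ _ _ (fun x hx => hle x (Finset.mem_Icc.mp hx).2)
      _ = ((ζ₀ + 1 : ℕ) : ℝ) * f ζ₀ := by
          rw [Nat.card_Icc, nsmul_eq_mul]; norm_num
    · have hζm : ζ₀ = m := le_antisymm hζ₀ hge
      have : ν ≤ f ζ₀ := by
        calc ν ≤ ∑ ζ ∈ Finset.Icc ζ₀ m, f ζ := hupper
        _ = f ζ₀ := by rw [hζm, Finset.Icc_self, Finset.sum_singleton]
      apply finish 1 (by exact_mod_cast hm) (by push_cast; linarith)
  · push_neg at hmono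
    obtain ⟨k, hk, hdec⟩ := hmono
    have hζ₀1 : 1 ≤ ζ₀ := Nat.one_le_iff_ne_zero.mpr (by rintro rfl; exact Nat.not_lt_zero k hk)
    -- decrease propagates
    have prop : ∀ j, k ≤ j → j < m → f (j + 1) < f j := by
      intro j hj
      induction j, hj using Nat.le_induction with
      | base => intro _; exact hdec
      | succ j hj ih =>
        intro hjm
        have h1 : f (j + 1) < f j := ih (by omega)
        have h2 := hnlm (j + 1) (by omega) (by omega)
        simp only [Nat.add_sub_cancel] at h2
        rcases min_lt_iff.mp h2 with h | h
        · exact absurd h (not_lt.mpr h1.le)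
        · exact h
    have hle : ∀ ζ, ζ₀ ≤ ζ → ζ ≤ m → f ζ ≤ f ζ₀ := by
      intro ζ hζ
      induction ζ, hζ using Nat.le_induction with
      | base => intro _; exact le_refl _
      | succ ζ hζ ih =>
        intro hζm
        exact le_trans (prop ζ (by omega) (by omega)).le (ih (by omega))
    apply finish (m - ζ₀ + 1) (by exact_mod_cast (by omega : m - ζ₀ + 1 ≤ m)) ?_
    calc ν ≤ ∑ ζ ∈ Finset.Icc ζ₀ m, f ζ := hupper
    _ ≤ (Finset.Icc ζ₀ m).card • f ζ₀ :=
        Finset.sum_le_card_nsmul _ _ _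
          (fun x hx => hle x (Finset.mem_Icc.mp hx).1 (Finset.mem_Icc.mp hx).2)
    _ = ((m - ζ₀ + 1 : ℕ) : ℝ) * f ζ₀ := by
        rw [Nat.card_Icc, nsmul_eq_mul]; congr 1; exact Nat.cast_inj.mpr (by omega)
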